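/- Conversely (Crandall–Tartar), a map on bounded functions that commutes with addition of constants and is sup-norm nonexpansive is monotone: if T(u + c) = T(u) + c and ‖Tu − Tv‖_∞ ≤ ‖u − v‖_∞ for all u, v, then u ≤ v implies Tu ≤ Tv. -/
import Mathlib

/-- Crandall–Tartar converse: a map on bounded functions commuting with addition
of constants that is sup-norm nonexpansive is monotone. -/
theorem stmt_16 {S : Type*} (T : (S → ℝ) → (S → ℝ))
    (hconst : ∀ (u : S → ℝ) (c : ℝ), T (fun i => u i + c) = fun i => T u i + c)
    (hnonexp : ∀ (u v : S → ℝ) (C : ℝ),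
      (∀ i, |u i - v i| ≤ C) → ∀ i, |T u i - T v i| ≤ C)
    (u v : S → ℝ) (hbdd : ∃ C, ∀ i, |u i - v i| ≤ C)
    (hle : ∀ i, u i ≤ v i) :
    ∀ i, T u i ≤ T v i := by
  obtain ⟨C, hC⟩ := hbdd
  have key : ∀ i, |T (fun i => u i + C) i - T v i| ≤ C := by
    apply hnonexp
    intro i
    have h1 := hC i
    have h2 := hle i
    rw [abs_le] at h1 ⊢
    constructor <;> linarith [h1.1, h1.2]
  intro i
  have := key i
  rw [hconst u C] at this
  simp only at this
  rw [abs_le] at this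
  linarith [this.2]
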